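/- Let φ: ℝ → ℝ satisfy -log(1 - x + x²/2) ≤ φ(x) ≤ log(1 + x + x²/2) for all x. Then for all x₁, x₂ ∈ ℝ: |φ(x₁) - φ(x₂) - (x₁ - x₂)| ≤ log(1 + x₁²x₂²/2) + |x₁ - x₂|·( (x₁²x₂²/2)/(1 + x₁²x₂²/2) + |x₁ - x₂| ). -/

import Mathlib

lemma catoni_pos1 (x : ℝ) : 0 < 1 + x + x^2/2 := by nlinarith [sq_nonneg (x+1)]
lemma catoni_pos2 (x : ℝ) : 0 < 1 - x + x^2/2 := by nlinarith [sq_nonneg (x-1)]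

lemma catoni_key (a b : ℝ) :
    Real.log ((1 + a + a^2/2) * (1 - b + b^2/2)) - (a - b) ≤
      Real.log (1 + a^2 * b^2 / 2) +
        |a - b| * ((a^2 * b^2 / 2) / (1 + a^2 * b^2 / 2) + |a - b|) := by
  set P := (1 + a + a^2/2) * (1 - b + b^2/2) with hPdef
  set t := 1 + a^2 * b^2 / 2 with htdef
  have ht : 0 < t := by positivity
  have hP : 0 < P := mul_pos (catoni_pos1 a) (catoni_pos2 b)
  have hlog : Real.log P ≤ Real.log t + (P/t - 1) := by
    have h1 := Real.log_le_sub_one_of_pos (div_pos hP ht)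
    have h2 := Real.log_div hP.ne' ht.ne'
    linarith
  set D := |a - b| with hDdef
  have hD0 : 0 ≤ |a - b| := abs_nonneg _
  have hD1 : a - b ≤ |a - b| := le_abs_self _
  have hD2 : -(a - b) ≤ |a - b| := neg_le_abs _
  have hD3 : |a - b|^2 = (a - b)^2 := sq_abs _
  have h1 : P - t - (a - b) * t ≤ |a - b| * (t - 1) + |a - b|^2 * t := by
    rw [hPdef, htdef]
    nlinarith [sq_nonneg ((a - b) + a*b/2),
      mul_nonneg (sq_nonneg (a*b)) (by linarith : (0:ℝ) ≤ |a - b| - (a - b)),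
      mul_nonneg (mul_nonneg hD0 hD0) (by positivity : (0:ℝ) ≤ a^2 * b^2 / 2)]
  have e1 : P/t - 1 - (a - b) = (P - t - (a - b) * t)/t := by field_simp
  have e2 : |a - b| * ((a^2 * b^2 / 2) / t + |a - b|)
      = (|a - b| * (t - 1) + |a - b|^2 * t)/t := by
    rw [htdef]; field_simp; ring
  have h2 : P/t - 1 - (a - b) ≤ |a - b| * ((a^2 * b^2 / 2) / t + |a - b|) := by
    rw [e1, e2]
    exact div_le_div_of_nonneg_right h1 ht.le
  linarith

theorem catoni_expansion_bound (φ : ℝ → ℝ)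
    (hφ : ∀ x : ℝ, -Real.log (1 - x + x^2/2) ≤ φ x ∧ φ x ≤ Real.log (1 + x + x^2/2)) :
    ∀ x₁ x₂ : ℝ, |φ x₁ - φ x₂ - (x₁ - x₂)| ≤
      Real.log (1 + x₁^2 * x₂^2 / 2) +
        |x₁ - x₂| * ((x₁^2 * x₂^2 / 2) / (1 + x₁^2 * x₂^2 / 2) + |x₁ - x₂|) := by
  intro a b
  rw [abs_le]
  constructor
  · -- lower bound: φ a - φ b ≥ -log((1-a+a²/2)(1+b+b²/2))
    have key := catoni_key (-a) (-b)
    have e : (1 + -a + (-a)^2/2) * (1 - -b + (-b)^2/2)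
        = (1 - a + a^2/2) * (1 + b + b^2/2) := by ring
    rw [e] at key
    have habs : |-a - -b| = |a - b| := by rw [show -a - -b = -(a - b) by ring, abs_neg]
    have hsq : (-a)^2 * (-b)^2 = a^2 * b^2 := by ring
    rw [habs, hsq] at key
    have hlm := Real.log_mul (catoni_pos2 a).ne' (catoni_pos1 b).ne'
    have h1 := (hφ a).1
    have h2 := (hφ b).2
    linarith
  · have key := catoni_key a b
    have hlm := Real.log_mul (catoni_pos1 a).ne' (catoni_pos2 b).ne'
    have h1 := (hφ a).2
    have h2 := (hφ b).1
    linarith
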